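/- Completeness of the Folk characterization for weak SPEs: if P_{α*}(hv) ≠ ∅ for every history hv of the initialized game (G, v_0), then for every play ρ ∈ P_{α*}(v_0) there exists a weak SPE of (G, v_0) whose outcome is exactly ρ. -/

import Mathlib

open Classical

noncomputable section

/-- A multiplayer turn-based quantitative game on a directed graph:
`owner` assigns each vertex to a player, `E` is the edge relation (every
vertex has a successor), and `cost i` is player `i`'s cost function on
infinite sequences of vertices (to be minimized), valued in `ℝ ∪ {±∞}`. -/
structure QGame (P V : Type) where
  owner : V → P
  E : V → V → Prop
  succ_exists : ∀ v, ∃ v', E v v'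
  cost : P → (ℕ → V) → EReal

namespace QGame

variable {P V : Type}

/-- An infinite play of the game: consecutive vertices are joined by edges. -/
def IsPlay (G : QGame P V) (ρ : ℕ → V) : Prop := ∀ n, G.E (ρ n) (ρ (n + 1))

/-- Concatenation `hρ` of a finite history `h` with an infinite play `ρ`. -/
def prepend (h : List V) (ρ : ℕ → V) : ℕ → V := fun n =>
  if hn : n < h.length then h.get ⟨n, hn⟩ else ρ (n - h.length)

/-- The prefix of length `n` of a play, as a list. -/
def playPrefix (ρ : ℕ → V) (n : ℕ) : List V := List.ofFn fun k : Fin n => ρ k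

/-- `hv` is a history of the game initialized at `v0`: here `h` is the strict
past and `v` the current vertex; the sequence `h ++ [v]` starts at `v0` and
follows edges. -/
def IsHist (G : QGame P V) (v0 : V) (h : List V) (v : V) : Prop :=
  (h ++ [v]).head? = some v0 ∧ List.Chain' G.E (h ++ [v])

/-- A (turn-based) strategy profile: given the past history and the current
vertex, choose the next vertex.  An individual strategy of player `i` is of
the same type; only its values at vertices owned by `i` matter. -/
abbrev Strat (P V : Type) := List V → V → V

/-- A profile/strategy is valid if it always follows edges. -/
def Valid (G : QGame P V) (σ : Strat P V) : Prop := ∀ h v, G.E v (σ h v)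

/-- History/current-vertex pair produced after `n` steps of `σ` from `v`. -/
def outcomeAux (σ : Strat P V) (v : V) : ℕ → List V × V
  | 0 => ([], v)
  | n + 1 =>
      let p := outcomeAux σ v n
      (p.1 ++ [p.2], σ p.1 p.2)

/-- The outcome play of profile `σ` from initial vertex `v`. -/
def outcome (σ : Strat P V) (v : V) (n : ℕ) : V := (outcomeAux σ v n).2

/-- The profile where player `i` unilaterally deviates to strategy `τ`
from the profile `σ`. -/
def devProf (G : QGame P V) (σ τ : Strat P V) (i : P) : Strat P V :=
  fun h v => if G.owner v = i then τ h v else σ h v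

/-- The set of deviation steps of `τ` from `σ` (for player `i`, from `v`):
positions `n` along the outcome of the deviated profile where the current
vertex belongs to player `i` and `τ` disagrees with `σ`. -/
def devSteps (G : QGame P V) (σ τ : Strat P V) (i : P) (v : V) : Set ℕ :=
  {n | G.owner (outcome (G.devProf σ τ i) v n) = i ∧
       σ (outcomeAux (G.devProf σ τ i) v n).1 (outcome (G.devProf σ τ i) v n) ≠
       τ (outcomeAux (G.devProf σ τ i) v n).1 (outcome (G.devProf σ τ i) v n)}

/-- `τ` is finitely deviating from `σ`. -/
def FinDev (G : QGame P V) (σ τ : Strat P V) (i : P) (v : V) : Prop :=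
  (G.devSteps σ τ i v).Finite

/-- `τ` is one-shot deviating from `σ`: its unique deviation step is at the
initial vertex. -/
def OneShotDev (G : QGame P V) (σ τ : Strat P V) (i : P) (v : V) : Prop :=
  G.devSteps σ τ i v = {0}

/-- Nash equilibrium of the profile `σ` from `v`, with respect to a cost
assignment `c` (no player has a profitable unilateral deviation). -/
def IsNEwith (G : QGame P V) (c : P → (ℕ → V) → EReal) (σ : Strat P V) (v : V) : Prop :=
  ∀ i τ, G.Valid τ →
    c i (outcome σ v) ≤ c i (outcome (G.devProf σ τ i) v)

/-- Weak Nash equilibrium: no profitable finitely deviating strategy. -/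
def IsWeakNEwith (G : QGame P V) (c : P → (ℕ → V) → EReal) (σ : Strat P V) (v : V) : Prop :=
  ∀ i τ, G.Valid τ → G.FinDev σ τ i v →
    c i (outcome σ v) ≤ c i (outcome (G.devProf σ τ i) v)

/-- Very weak Nash equilibrium: no profitable one-shot deviating strategy. -/
def IsVeryWeakNEwith (G : QGame P V) (c : P → (ℕ → V) → EReal) (σ : Strat P V) (v : V) : Prop :=
  ∀ i τ, G.Valid τ → G.OneShotDev σ τ i v →
    c i (outcome σ v) ≤ c i (outcome (G.devProf σ τ i) v)

/-- The strategy profile induced by `σ` in the subgame after history `h`. -/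
def subStrat (σ : Strat P V) (h : List V) : Strat P V := fun g v => σ (h ++ g) v

/-- The cost functions of the subgame after history `h`. -/
def subCost (G : QGame P V) (h : List V) : P → (ℕ → V) → EReal :=
  fun i ρ => G.cost i (prepend h ρ)

/-- Subgame perfect equilibrium: Nash equilibrium in every subgame. -/
def IsSPE (G : QGame P V) (v0 : V) (σ : Strat P V) : Prop :=
  ∀ h v, G.IsHist v0 h v → G.IsNEwith (G.subCost h) (subStrat σ h) v

/-- Weak subgame perfect equilibrium: weak NE in every subgame. -/
def IsWeakSPE (G : QGame P V) (v0 : V) (σ : Strat P V) : Prop :=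
  ∀ h v, G.IsHist v0 h v → G.IsWeakNEwith (G.subCost h) (subStrat σ h) v

/-- Very weak subgame perfect equilibrium: very weak NE in every subgame. -/
def IsVeryWeakSPE (G : QGame P V) (v0 : V) (σ : Strat P V) : Prop :=
  ∀ h v, G.IsHist v0 h v → G.IsVeryWeakNEwith (G.subCost h) (subStrat σ h) v

/-- One elimination step: `ρ` (a potential outcome in the subgame after `h`)
is erased if some player `i` controlling a vertex `ρ n` along `hρ` has an
alternative edge to some `v' ≠ ρ (n+1)` such that every play `ρ'` in the
current potential set after the extended history gives `i` a strictly
smaller cost than `hρ`. -/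
def Eset (G : QGame P V) (Pr : List V → V → Set (ℕ → V)) (h : List V) :
    Set (ℕ → V) :=
  {ρ | ∃ n v', G.E (ρ n) v' ∧ v' ≠ ρ (n + 1) ∧
      ∀ ρ' ∈ Pr (h ++ playPrefix ρ (n + 1)) v',
        G.cost (G.owner (ρ n)) (prepend (h ++ playPrefix ρ (n + 1)) ρ') <
          G.cost (G.owner (ρ n)) (prepend h ρ)}

/-- The transfinite sequence `P_α(hv)` of sets of potential outcomes of weak
Nash equilibria in the subgame `(G|_h, v)`: all plays at stage `0`, removal
of `E_α` at successors, intersections at limits. -/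
def Pset (G : QGame P V) (α : Ordinal) : List V → V → Set (ℕ → V) :=
  Ordinal.limitRecOn (motive := fun _ => List V → V → Set (ℕ → V)) α
    (fun _h v => {ρ | G.IsPlay ρ ∧ ρ 0 = v})
    (fun _ Pr => fun h v => Pr h v \ G.Eset Pr h)
    (fun α _ Pr => fun h v => ⋂ (β : Ordinal) (hβ : β < α), Pr β hβ h v)

/-- A sequence of plays converges to `ρ` (in the product topology on `V^ω`
with `V` discrete) iff every finite prefix of `ρ` is eventually a prefix of
the members of the sequence. -/
def Converges (ρs : ℕ → ℕ → V) (ρ : ℕ → V) : Prop :=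
  ∀ m, ∃ N, ∀ n ≥ N, ∀ k ≤ m, ρs n k = ρ k

/-- Upper semicontinuity of a cost function on plays. -/
def USCcost (G : QGame P V) (c : (ℕ → V) → EReal) : Prop :=
  ∀ (ρs : ℕ → ℕ → V) (ρ : ℕ → V), (∀ n, G.IsPlay (ρs n)) → G.IsPlay ρ →
    Converges ρs ρ →
      Filter.limsup (fun n => c (ρs n)) Filter.atTop ≤ c ρ

/-- A strategy (profile) is finite-memory if it is computed by a Moore
machine: a finite set `M` of memory states, updated while reading the
history, determines the move. -/
def FinMem (σ : Strat P V) : Prop :=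
  ∃ (M : Type) (_ : Finite M) (m0 : M) (upd : M → V → M) (act : M → V → V),
    ∀ h v, σ h v = act (h.foldl upd m0) v

/-- Quantitative reachability cost: the least index at which `ρ` visits the
target set `T`, and `+∞` if `T` is never visited. -/
def reachCost (T : Set V) (ρ : ℕ → V) : EReal :=
  if h : ∃ n, ρ n ∈ T then ((Nat.find h : ℕ) : EReal) else ⊤

/-- `G` is a quantitative reachability game with target sets `T i`. -/
def IsReachGame (G : QGame P V) (T : P → Set V) : Prop :=
  ∀ i ρ, G.cost i ρ = reachCost (T i) ρ

/-- The set of players that have not visited their target set along the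
history `h`. -/
def Iset (T : P → Set V) (h : List V) : Set P := {i | ∀ u ∈ h, u ∉ T i}

end QGame

namespace QGame

universe u

variable {P V : Type} (G : QGame P V)

/-! Basic `Pset` unfolding lemmas. -/

lemma Pset_zero : G.Pset (0 : Ordinal.{u}) = fun _h v => {ρ | G.IsPlay ρ ∧ ρ 0 = v} :=
  Ordinal.limitRecOn_zero _ _ _

lemma Pset_succ (α : Ordinal.{u}) :
    G.Pset (α + 1) = fun h v => G.Pset α h v \ G.Eset (G.Pset α) h := by
  unfold Pset
  rw [Ordinal.add_one_eq_succ, Ordinal.limitRecOn_succ]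

lemma Pset_limit {α : Ordinal.{u}} (hα : Order.IsSuccLimit α) :
    G.Pset α = fun h v => ⋂ (β : Ordinal) (_ : β < α), G.Pset β h v := by
  unfold Pset
  rw [Ordinal.limitRecOn_limit _ _ _ _ hα]

lemma Pset_subset_zero (α : Ordinal.{u}) :
    ∀ h v, G.Pset α h v ⊆ G.Pset (0 : Ordinal.{u}) h v := by
  induction α using Ordinal.limitRecOn with
  | zero => exact fun h v => subset_rfl
  | add_one β ih =>
      intro h v
      rw [Pset_succ]
      exact Set.diff_subset.trans (ih h v)
  | limit β hβ ih =>
      intro h v ρ hρ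
      rw [Pset_limit G hβ] at hρ
      simp only [Set.mem_iInter] at hρ
      exact ih 0 hβ.pos h v (hρ 0 hβ.pos)

lemma mem_Pset_play {α : Ordinal.{u}} {h v ρ} (hρ : ρ ∈ G.Pset α h v) :
    G.IsPlay ρ ∧ ρ 0 = v := by
  have := G.Pset_subset_zero α h v hρ
  rw [Pset_zero] at this
  exact this

/-! `playPrefix` and `prepend` lemmas. -/

lemma playPrefix_zero (ρ : ℕ → V) : playPrefix ρ 0 = [] := rfl

lemma playPrefix_length (ρ : ℕ → V) (n : ℕ) : (playPrefix ρ n).length = n := by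
  simp [playPrefix]

lemma playPrefix_succ (ρ : ℕ → V) (n : ℕ) :
    playPrefix ρ (n + 1) = ρ 0 :: playPrefix (fun k => ρ (k + 1)) n := by
  simp [playPrefix, List.ofFn_succ]

lemma playPrefix_succ' (ρ : ℕ → V) (n : ℕ) :
    playPrefix ρ (n + 1) = playPrefix ρ n ++ [ρ n] := by
  simp only [playPrefix, List.ofFn_succ', List.concat_eq_append]
  simp

lemma playPrefix_one (ρ : ℕ → V) : playPrefix ρ 1 = [ρ 0] := by
  rw [playPrefix_succ, playPrefix_zero]

lemma prepend_nil (ρ : ℕ → V) : prepend [] ρ = ρ := by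
  funext n; simp [prepend]

lemma playPrefix_getElem (ρ : ℕ → V) (n k : ℕ) (hk : k < n)
    (hk' : k < (playPrefix ρ n).length) : (playPrefix ρ n)[k] = ρ k := by
  simp [playPrefix]

lemma prepend_shift {h : List V} {ρ : ℕ → V} {u : V} (h0 : ρ 0 = u) :
    prepend (h ++ [u]) (fun n => ρ (n + 1)) = prepend h ρ := by
  funext m
  simp only [prepend, List.length_append, List.length_singleton]
  rcases lt_trichotomy m h.length with hm | hm | hm
  · rw [dif_pos (by omega), dif_pos hm]
    simp only [List.get_eq_getElem]
    exact List.getElem_append_left hm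
  · subst hm
    rw [dif_pos (by omega), dif_neg (by omega)]
    simp only [List.get_eq_getElem]
    rw [List.getElem_append_right (le_refl _)]
    simp [h0]
  · rw [dif_neg (by omega), dif_neg (by omega)]
    congr 1
    omega

/-! Shift-closure of the `Pset` sets. -/

lemma Pset_shift (α : Ordinal.{u}) :
    ∀ h v ρ, ρ ∈ G.Pset α h v →
      (fun n => ρ (n + 1)) ∈ G.Pset α (h ++ [v]) (ρ 1) := by
  induction α using Ordinal.limitRecOn with
  | zero =>
      intro h v ρ hρ
      rw [Pset_zero] at hρ ⊢
      exact ⟨fun n => hρ.1 (n + 1), rfl⟩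
  | add_one β ih =>
      intro h v ρ hρ
      rw [Pset_succ] at hρ ⊢
      obtain ⟨hmem, hE⟩ := hρ
      have h0 : ρ 0 = v := (G.mem_Pset_play hmem).2
      refine ⟨ih _ _ _ hmem, ?_⟩
      rintro ⟨n, v', he, hne, hall⟩
      refine hE ⟨n + 1, v', he, hne, ?_⟩
      have hl : h ++ playPrefix ρ (n + 1 + 1) =
          (h ++ [v]) ++ playPrefix (fun k => ρ (k + 1)) (n + 1) := by
        rw [playPrefix_succ, h0, List.append_assoc, List.singleton_append]
      intro σ hσ
      have := hall σ (by rw [← hl] at * <;> exact (hl ▸ hσ))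
      rw [hl]
      rw [prepend_shift h0] at this
      exact this
  | limit β hβ ih =>
      intro h v ρ hρ
      rw [Pset_limit G hβ] at hρ ⊢
      simp only [Set.mem_iInter] at hρ ⊢
      exact fun γ hγ => ih γ hγ h v ρ (hρ γ hγ)


/-! The constructed strategy. -/

/-- An arbitrary play from `v`. -/
noncomputable def anyPlay (v : V) : ℕ → V :=
  fun n => (fun w => (G.succ_exists w).choose)^[n] v

lemma anyPlay_zero (v : V) : G.anyPlay v 0 = v := rfl

lemma anyPlay_isPlay (v : V) : G.IsPlay (G.anyPlay v) := by
  intro n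
  show G.E _ ((fun w => (G.succ_exists w).choose)^[n+1] v)
  rw [Function.iterate_succ_apply']
  exact (G.succ_exists _).choose_spec

/-- Choose a play in `Pset αstar h' w` whose `j`-cost prefixed by `h'` is at
least `b`, if one exists; otherwise an arbitrary play from `w`. -/
noncomputable def choosePlay (αstar : Ordinal.{u}) (h' : List V) (w : V) (j : P) (b : EReal) :
    ℕ → V :=
  if c : ∃ ρ', ρ' ∈ G.Pset αstar h' w ∧ b ≤ G.cost j (prepend h' ρ') then c.choose
  else G.anyPlay w

lemma choosePlay_spec {αstar : Ordinal.{u}} {h' : List V} {w : V} {j : P} {b : EReal}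
    (hc : ∃ ρ', ρ' ∈ G.Pset αstar h' w ∧ b ≤ G.cost j (prepend h' ρ')) :
    G.choosePlay αstar h' w j b ∈ G.Pset αstar h' w ∧
      b ≤ G.cost j (prepend h' (G.choosePlay αstar h' w j b)) := by
  rw [choosePlay, dif_pos hc]
  exact hc.choose_spec

lemma choosePlay_zero (αstar : Ordinal.{u}) (h' : List V) (w : V) (j : P) (b : EReal) :
    G.choosePlay αstar h' w j b 0 = w := by
  rw [choosePlay]
  split
  · next hc => exact (G.mem_Pset_play hc.choose_spec.1).2
  · exact G.anyPlay_zero w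

lemma choosePlay_isPlay (αstar : Ordinal.{u}) (h' : List V) (w : V) (j : P) (b : EReal) :
    G.IsPlay (G.choosePlay αstar h' w j b) := by
  rw [choosePlay]
  split
  · next hc => exact (G.mem_Pset_play hc.choose_spec.1).1
  · exact G.anyPlay_isPlay w

variable (αstar : Ordinal.{u}) (v0 : V) (ρ : ℕ → V)

/-- The current reference play, as a function of the reversed history. -/
noncomputable def planAux : List V → V → ℕ → V
  | [], w => if w = v0 then ρ else G.anyPlay w
  | u :: rest, w =>
      if w = planAux rest u 1 then fun n => planAux rest u (n + 1)
      else G.choosePlay αstar (rest.reverse ++ [u]) w (G.owner u)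
        (G.cost (G.owner u) (prepend rest.reverse (planAux rest u)))

/-- The current reference play after history `(h, v)`. -/
noncomputable def plan (h : List V) (v : V) : ℕ → V := G.planAux αstar v0 ρ h.reverse v

lemma plan_nil (v : V) :
    G.plan αstar v0 ρ [] v = if v = v0 then ρ else G.anyPlay v := rfl

lemma plan_append (h : List V) (u w : V) :
    G.plan αstar v0 ρ (h ++ [u]) w =
      if w = G.plan αstar v0 ρ h u 1 then (fun n => G.plan αstar v0 ρ h u (n + 1))
      else G.choosePlay αstar (h ++ [u]) w (G.owner u)
        (G.cost (G.owner u) (prepend h (G.plan αstar v0 ρ h u))) := by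
  rw [plan, List.reverse_append]
  simp only [List.reverse_singleton, List.singleton_append, planAux, List.reverse_reverse,
    List.append_eq, List.nil_append]
  rfl

variable {v0 ρ} in
lemma plan_zero (hρ0 : ρ 0 = v0) : ∀ (h : List V) (v : V), G.plan αstar v0 ρ h v 0 = v := by
  intro h
  induction h using List.reverseRecOn with
  | nil =>
      intro v
      rw [plan_nil]
      split
      · next hv => rw [hρ0, hv]
      · exact G.anyPlay_zero v
  | append_singleton h u ih =>
      intro v
      rw [plan_append]
      split
      · next hv => exact hv.symm
      · exact G.choosePlay_zero αstar _ _ _ _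

variable {v0 ρ} in
lemma plan_isPlay (hρp : G.IsPlay ρ) : ∀ (h : List V) (v : V), G.IsPlay (G.plan αstar v0 ρ h v) := by
  intro h
  induction h using List.reverseRecOn with
  | nil =>
      intro v
      rw [plan_nil]
      split
      · exact hρp
      · exact G.anyPlay_isPlay v
  | append_singleton h u ih =>
      intro v
      rw [plan_append]
      split
      · exact fun n => ih u (n + 1)
      · exact G.choosePlay_isPlay αstar _ _ _ _

/-- The constructed strategy profile: always follow the current plan. -/
noncomputable def theStrat : Strat P V := fun h v => G.plan αstar v0 ρ h v 1

variable {v0 ρ} in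
lemma theStrat_valid (hρp : G.IsPlay ρ) (hρ0 : ρ 0 = v0) :
    G.Valid (G.theStrat αstar v0 ρ) := by
  intro h v
  have := G.plan_isPlay αstar (ρ := ρ) (v0 := v0) hρp h v 0
  rwa [G.plan_zero αstar hρ0 h v] at this

/-! Outcomes, histories and the follow lemma. -/

lemma outcomeAux_succ (π : Strat P V) (v : V) (n : ℕ) :
    outcomeAux π v (n + 1) =
      ((outcomeAux π v n).1 ++ [(outcomeAux π v n).2],
        π (outcomeAux π v n).1 (outcomeAux π v n).2) := rfl

lemma outcomeAux_fst (π : Strat P V) (v : V) :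
    ∀ n, (outcomeAux π v n).1 = playPrefix (outcome π v) n := by
  intro n
  induction n with
  | zero => rfl
  | succ n ih => rw [outcomeAux_succ, playPrefix_succ', ← ih]; rfl

lemma isHist_step {v0 : V} {h : List V} {w w' : V}
    (hh : G.IsHist v0 h w) (he : G.E w w') : G.IsHist v0 (h ++ [w]) w' := by
  obtain ⟨h1, h2⟩ := hh
  constructor
  · rw [List.append_assoc]
    cases h with
    | nil => simpa using h1
    | cons a t => simpa using h1
  · unfold List.Chain'; rw [List.isChain_append]
    refine ⟨h2, List.isChain_singleton w', ?_⟩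
    intro x hx y hy
    simp only [List.head?_cons, Option.mem_def, Option.some_inj] at hy
    subst hy
    rw [List.getLast?_append] at hx
    simp only [List.getLast?_singleton, Option.or, Option.mem_def, Option.some_inj] at hx
    subst hx
    exact he

lemma isHist_init {v0 : V} {h : List V} {u v : V}
    (hh : G.IsHist v0 (h ++ [u]) v) : G.IsHist v0 h u ∧ G.E u v := by
  obtain ⟨h1, h2⟩ := hh
  rw [List.append_assoc, List.singleton_append] at h1 h2
  unfold List.Chain' at h2; rw [List.isChain_append] at h2
  obtain ⟨hc, hcv, hlink⟩ := h2
  refine ⟨⟨?_, ?_⟩, ?_⟩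
  · cases h with
    | nil => simpa using h1
    | cons a t => simpa using h1
  · unfold List.Chain'; rw [List.isChain_append]
    refine ⟨hc, List.isChain_singleton u, ?_⟩
    intro x hx y hy
    simp only [List.head?_cons, Option.mem_def, Option.some_inj] at hy
    subst hy
    exact hlink x hx u (by simp)
  · rcases List.isChain_cons_cons.mp hcv with ⟨he, _⟩
    exact he

lemma isHist_outcomeAux {v0 : V} {h : List V} {v : V} (π : Strat P V)
    (hπ : ∀ g w, G.E w (π g w)) (hh : G.IsHist v0 h v) :
    ∀ n, G.IsHist v0 (h ++ (outcomeAux π v n).1) ((outcomeAux π v n).2) := by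
  intro n
  induction n with
  | zero =>
      show G.IsHist v0 (h ++ []) v
      simpa using hh
  | succ n ih =>
      rw [outcomeAux_succ, ← List.append_assoc]
      exact G.isHist_step ih (hπ _ _)

variable {v0 ρ} in
lemma plan_follow (hρ0 : ρ 0 = v0) (h : List V) (w : V) :
    ∀ k, G.plan αstar v0 ρ (h ++ playPrefix (G.plan αstar v0 ρ h w) k)
        (G.plan αstar v0 ρ h w k) = fun j => G.plan αstar v0 ρ h w (k + j) := by
  intro k
  induction k with
  | zero => simp [playPrefix_zero, G.plan_zero αstar hρ0]
  | succ k ih =>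
      rw [playPrefix_succ', ← List.append_assoc, plan_append, ih]
      rw [if_pos rfl]
      funext j
      show G.plan αstar v0 ρ h w (k + (j + 1)) = G.plan αstar v0 ρ h w (k + 1 + j)
      congr 1
      omega

variable {v0 ρ} in
lemma outcome_tail (hρ0 : ρ 0 = v0) (π : Strat P V) (h : List V) (v : V) (M : ℕ)
    (hM : ∀ n, M ≤ n → π (outcomeAux π v n).1 (outcomeAux π v n).2
        = G.plan αstar v0 ρ (h ++ (outcomeAux π v n).1) (outcomeAux π v n).2 1) :
    ∀ k, outcomeAux π v (M + k) =
      ((outcomeAux π v M).1 ++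
         playPrefix (G.plan αstar v0 ρ (h ++ (outcomeAux π v M).1) (outcomeAux π v M).2) k,
       G.plan αstar v0 ρ (h ++ (outcomeAux π v M).1) (outcomeAux π v M).2 k) := by
  intro k
  induction k with
  | zero =>
      rw [G.plan_zero αstar hρ0]
      simp [playPrefix_zero]
  | succ k ih =>
      set g := (outcomeAux π v M).1 with hg
      set wM := (outcomeAux π v M).2 with hw
      set q := G.plan αstar v0 ρ (h ++ g) wM with hq
      have step : outcomeAux π v (M + (k + 1)) =
          (g ++ playPrefix q k ++ [q k], π (g ++ playPrefix q k) (q k)) := by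
        show outcomeAux π v ((M + k) + 1) = _
        rw [outcomeAux_succ, ih]
      have h2 : π (g ++ playPrefix q k) (q k) = q (k + 1) := by
        have hm := hM (M + k) (by omega)
        rw [ih] at hm
        simp only at hm
        rw [← List.append_assoc] at hm
        rw [hq] at hm
        rw [G.plan_follow αstar hρ0 (h ++ g) wM k] at hm
        simpa using hm
      rw [step, h2, List.append_assoc, ← playPrefix_succ']

/-! The plan stays inside the `Pset` sets along histories. -/

lemma not_eset {Pr : List V → V → Set (ℕ → V)} {h : List V} {p : ℕ → V} {w : V}
    (hp : p ∉ G.Eset Pr h) (hE : G.E (p 0) w) (hw : w ≠ p 1) :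
    ∃ ρ', ρ' ∈ Pr (h ++ [p 0]) w ∧
      G.cost (G.owner (p 0)) (prepend h p) ≤
        G.cost (G.owner (p 0)) (prepend (h ++ [p 0]) ρ') := by
  by_contra hc
  push_neg at hc
  exact hp ⟨0, w, hE, hw, by simpa [playPrefix_one] using hc⟩

variable {v0 ρ} in
lemma plan_mem (hρmem : ρ ∈ G.Pset αstar [] v0)
    (hfix : ∀ h v, G.IsHist v0 h v → G.Pset αstar h v = G.Pset (αstar + 1) h v) :
    ∀ h v, G.IsHist v0 h v → G.plan αstar v0 ρ h v ∈ G.Pset αstar h v := by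
  have hρ0 : ρ 0 = v0 := (G.mem_Pset_play hρmem).2
  intro h
  induction h using List.reverseRecOn with
  | nil =>
      intro v hv
      have hv0 : v = v0 := by
        have := hv.1
        simpa using this
      subst hv0
      rw [plan_nil, if_pos rfl]
      exact hρmem
  | append_singleton h u ih =>
      intro v hv
      obtain ⟨hhu, hE⟩ := G.isHist_init hv
      have hm := ih u hhu
      have hnE : G.plan αstar v0 ρ h u ∉ G.Eset (G.Pset αstar) h := by
        have hm' := hm
        rw [hfix h u hhu, Pset_succ] at hm'
        exact hm'.2
      have hp0 : G.plan αstar v0 ρ h u 0 = u := G.plan_zero αstar hρ0 h u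
      rw [plan_append]
      split
      · next hw =>
          have := G.Pset_shift αstar h u _ hm
          rwa [← hw] at this
      · next hw =>
          have hex := G.not_eset hnE (by rw [hp0]; exact hE) hw
          rw [hp0] at hex
          exact (G.choosePlay_spec hex).1
end QGame
open QGame in
/-- Completeness of the Folk characterization for weak
SPEs: if `α*` is a fixpoint of the elimination procedure and `P_{α*}(hv)` is
nonempty for every history `hv` of `(G, v0)`, then every play
`ρ ∈ P_{α*}(v0)` is the outcome of some weak SPE of `(G, v0)`. -/
theorem Pset_nonempty_gives_weakSPE {P V : Type} [Finite P] [Finite V]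
    (G : QGame P V) (v0 : V) (αstar : Ordinal)
    (hfix : ∀ h v, G.IsHist v0 h v →
      G.Pset αstar h v = G.Pset (αstar + 1) h v)
    (hne : ∀ h v, G.IsHist v0 h v → (G.Pset αstar h v).Nonempty) :
    ∀ ρ ∈ G.Pset αstar [] v0,
      ∃ σ : Strat P V, G.Valid σ ∧ G.IsWeakSPE v0 σ ∧ outcome σ v0 = ρ := by
  intro ρ hρmem
  have hρp : G.IsPlay ρ := (G.mem_Pset_play hρmem).1
  have hρ0 : ρ 0 = v0 := (G.mem_Pset_play hρmem).2
  refine ⟨G.theStrat αstar v0 ρ, G.theStrat_valid αstar hρp hρ0, ?_, ?_⟩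
  · -- weak SPE
    intro h v hhist i τ hτ hfd
    -- abbreviations
    have hπvalid : ∀ g w, G.E w
        (G.devProf (subStrat (G.theStrat αstar v0 ρ) h) τ i g w) := by
      intro g w
      show G.E w (if G.owner w = i then τ g w
        else subStrat (G.theStrat αstar v0 ρ) h g w)
      split
      · exact hτ g w
      · exact G.theStrat_valid αstar hρp hρ0 (h ++ g) w
    have hhist_n : ∀ n, G.IsHist v0
        (h ++ (outcomeAux (G.devProf (subStrat (G.theStrat αstar v0 ρ) h) τ i) v n).1)
        ((outcomeAux (G.devProf (subStrat (G.theStrat αstar v0 ρ) h) τ i) v n).2) :=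
      G.isHist_outcomeAux _ hπvalid hhist
    have hmem_n : ∀ n,
        G.plan αstar v0 ρ
          (h ++ (outcomeAux (G.devProf (subStrat (G.theStrat αstar v0 ρ) h) τ i) v n).1)
          ((outcomeAux (G.devProf (subStrat (G.theStrat αstar v0 ρ) h) τ i) v n).2)
          ∈ G.Pset αstar
          (h ++ (outcomeAux (G.devProf (subStrat (G.theStrat αstar v0 ρ) h) τ i) v n).1)
          ((outcomeAux (G.devProf (subStrat (G.theStrat αstar v0 ρ) h) τ i) v n).2) :=
      fun n => G.plan_mem αstar hρmem hfix _ _ (hhist_n n)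
    have hstep_nondev : ∀ n,
        n ∉ G.devSteps (subStrat (G.theStrat αstar v0 ρ) h) τ i v →
        G.devProf (subStrat (G.theStrat αstar v0 ρ) h) τ i
            (outcomeAux (G.devProf (subStrat (G.theStrat αstar v0 ρ) h) τ i) v n).1
            (outcomeAux (G.devProf (subStrat (G.theStrat αstar v0 ρ) h) τ i) v n).2
          = G.plan αstar v0 ρ
            (h ++ (outcomeAux (G.devProf (subStrat (G.theStrat αstar v0 ρ) h) τ i) v n).1)
            (outcomeAux (G.devProf (subStrat (G.theStrat αstar v0 ρ) h) τ i) v n).2 1 := by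
      intro n hn
      show (if G.owner ((outcomeAux (G.devProf (subStrat (G.theStrat αstar v0 ρ) h) τ i) v n).2) = i
          then τ (outcomeAux (G.devProf (subStrat (G.theStrat αstar v0 ρ) h) τ i) v n).1
            (outcomeAux (G.devProf (subStrat (G.theStrat αstar v0 ρ) h) τ i) v n).2
          else subStrat (G.theStrat αstar v0 ρ) h
            (outcomeAux (G.devProf (subStrat (G.theStrat αstar v0 ρ) h) τ i) v n).1
            (outcomeAux (G.devProf (subStrat (G.theStrat αstar v0 ρ) h) τ i) v n).2) = _
      split
      · next ho =>
          have heq : subStrat (G.theStrat αstar v0 ρ) h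
                (outcomeAux (G.devProf (subStrat (G.theStrat αstar v0 ρ) h) τ i) v n).1
                (outcomeAux (G.devProf (subStrat (G.theStrat αstar v0 ρ) h) τ i) v n).2
              = τ (outcomeAux (G.devProf (subStrat (G.theStrat αstar v0 ρ) h) τ i) v n).1
                (outcomeAux (G.devProf (subStrat (G.theStrat αstar v0 ρ) h) τ i) v n).2 := by
            by_contra hne
            exact hn ⟨ho, hne⟩
          rw [← heq]
          rfl
      · rfl
    -- the reference value
    set r : ℕ → EReal := fun n => G.cost i
      (prepend (h ++ (outcomeAux (G.devProf (subStrat (G.theStrat αstar v0 ρ) h) τ i) v n).1)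
        (G.plan αstar v0 ρ
          (h ++ (outcomeAux (G.devProf (subStrat (G.theStrat αstar v0 ρ) h) τ i) v n).1)
          ((outcomeAux (G.devProf (subStrat (G.theStrat αstar v0 ρ) h) τ i) v n).2))) with hr
    have hr_step : ∀ n, r n ≤ r (n + 1) := by
      intro n
      set gn := (outcomeAux (G.devProf (subStrat (G.theStrat αstar v0 ρ) h) τ i) v n).1 with hgn
      set wn := (outcomeAux (G.devProf (subStrat (G.theStrat αstar v0 ρ) h) τ i) v n).2 with hwn
      have hga : (outcomeAux (G.devProf (subStrat (G.theStrat αstar v0 ρ) h) τ i) v (n + 1)).1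
          = gn ++ [wn] := rfl
      have hwa : (outcomeAux (G.devProf (subStrat (G.theStrat αstar v0 ρ) h) τ i) v (n + 1)).2
          = G.devProf (subStrat (G.theStrat αstar v0 ρ) h) τ i gn wn := rfl
      have hp0 : G.plan αstar v0 ρ (h ++ gn) wn 0 = wn := G.plan_zero αstar hρ0 _ _
      by_cases hd : n ∈ G.devSteps (subStrat (G.theStrat αstar v0 ρ) h) τ i v
      · -- deviation step
        have ho : G.owner wn = i := hd.1
        have hne : subStrat (G.theStrat αstar v0 ρ) h gn wn ≠ τ gn wn := hd.2
        have hπw : G.devProf (subStrat (G.theStrat αstar v0 ρ) h) τ i gn wn = τ gn wn := by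
          show (if G.owner wn = i then τ gn wn
            else subStrat (G.theStrat αstar v0 ρ) h gn wn) = τ gn wn
          rw [if_pos ho]
        have hmem := hmem_n n
        rw [hfix _ _ (hhist_n n), Pset_succ] at hmem
        have hnE : G.plan αstar v0 ρ (h ++ gn) wn ∉ G.Eset (G.Pset αstar) (h ++ gn) := hmem.2
        have hEdge : G.E (G.plan αstar v0 ρ (h ++ gn) wn 0) (τ gn wn) := by
          rw [hp0]; exact hτ gn wn
        have hneq : τ gn wn ≠ G.plan αstar v0 ρ (h ++ gn) wn 1 :=
          fun hq => hne hq.symm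
        have hex := G.not_eset hnE hEdge hneq
        rw [hp0] at hex
        have hspec := G.choosePlay_spec hex
        have hplan : G.plan αstar v0 ρ ((h ++ gn) ++ [wn]) (τ gn wn)
            = G.choosePlay αstar ((h ++ gn) ++ [wn]) (τ gn wn) (G.owner wn)
              (G.cost (G.owner wn) (prepend (h ++ gn) (G.plan αstar v0 ρ (h ++ gn) wn))) := by
          rw [plan_append, if_neg hneq]
        rw [hr]
        dsimp only
        rw [hga, hwa, hπw, ← List.append_assoc, hplan, ho]
        rw [ho] at hspec
        exact hspec.2
      · -- non-deviation step
        have hmove := hstep_nondev n hd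
        have key : G.plan αstar v0 ρ ((h ++ gn) ++ [wn])
              (G.plan αstar v0 ρ (h ++ gn) wn 1)
            = fun k => G.plan αstar v0 ρ (h ++ gn) wn (k + 1) := by
          rw [plan_append, if_pos rfl]
        rw [hr]
        dsimp only
        rw [hga, hwa, hmove, ← List.append_assoc, key, prepend_shift hp0]
    have hmono : ∀ n, r 0 ≤ r n := by
      intro n
      induction n with
      | zero => exact le_refl _
      | succ n ih => exact ih.trans (hr_step n)
    -- bound on deviation steps
    obtain ⟨K, hK⟩ := hfd.bddAbove
    have hMnd : ∀ n, K + 1 ≤ n →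
        n ∉ G.devSteps (subStrat (G.theStrat αstar v0 ρ) h) τ i v := by
      intro n hn hd
      have := hK hd
      omega
    have htail := G.outcome_tail αstar hρ0
      (G.devProf (subStrat (G.theStrat αstar v0 ρ) h) τ i) h v (K + 1)
      (fun n hn => hstep_nondev n (hMnd n hn))
    -- outcome of the non-deviated profile
    have hout : ∀ n, outcome (subStrat (G.theStrat αstar v0 ρ) h) v n
        = G.plan αstar v0 ρ h v n := by
      intro n
      have ht := G.outcome_tail αstar hρ0 (subStrat (G.theStrat αstar v0 ρ) h) h v 0
        (fun n _ => rfl) n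
      rw [Nat.zero_add] at ht
      have h2 : (outcomeAux (subStrat (G.theStrat αstar v0 ρ) h) v n).2
          = G.plan αstar v0 ρ h v n := by rw [ht]; simp [outcomeAux]
      exact h2
    -- final prefix computation
    set gM := (outcomeAux (G.devProf (subStrat (G.theStrat αstar v0 ρ) h) τ i) v (K + 1)).1
      with hgM
    set wM := (outcomeAux (G.devProf (subStrat (G.theStrat αstar v0 ρ) h) τ i) v (K + 1)).2
      with hwM
    have hq : ∀ k, G.plan αstar v0 ρ (h ++ gM) wM k
        = outcome (G.devProf (subStrat (G.theStrat αstar v0 ρ) h) τ i) v (K + 1 + k) := by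
      intro k
      show _ = (outcomeAux (G.devProf (subStrat (G.theStrat αstar v0 ρ) h) τ i) v (K + 1 + k)).2
      rw [htail k]
    have hlen : (h ++ gM).length = h.length + (K + 1) := by
      rw [List.length_append, hgM, outcomeAux_fst, playPrefix_length]
    have hfinal : prepend h (outcome (G.devProf (subStrat (G.theStrat αstar v0 ρ) h) τ i) v)
        = prepend (h ++ gM) (G.plan αstar v0 ρ (h ++ gM) wM) := by
      funext m
      simp only [prepend]
      by_cases h1 : m < h.length
      · rw [dif_pos h1, dif_pos (by rw [hlen]; omega)]
        simp only [List.get_eq_getElem]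
        exact (List.getElem_append_left h1).symm
      · by_cases h2 : m < h.length + (K + 1)
        · rw [dif_neg h1, dif_pos (by rw [hlen]; omega)]
          simp only [List.get_eq_getElem]
          rw [List.getElem_append_right (by omega : h.length ≤ m)]
          have : gM = playPrefix
              (outcome (G.devProf (subStrat (G.theStrat αstar v0 ρ) h) τ i) v) (K + 1) := by
            rw [hgM, outcomeAux_fst]
          simp only [this, playPrefix, List.getElem_ofFn]
        · rw [dif_neg h1, dif_neg (by rw [hlen]; omega)]
          rw [hq, hlen]
          congr 1
          omega
    -- conclude
    show G.cost i (prepend h (outcome (subStrat (G.theStrat αstar v0 ρ) h) v)) ≤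
      G.cost i (prepend h (outcome (G.devProf (subStrat (G.theStrat αstar v0 ρ) h) τ i) v))
    rw [hfinal, funext hout]
    have hr0 : r 0 = G.cost i (prepend h (G.plan αstar v0 ρ h v)) := by
      rw [hr]
      show G.cost i (prepend (h ++ []) (G.plan αstar v0 ρ (h ++ []) v)) = _
      rw [List.append_nil]
    have hrM : r (K + 1) = G.cost i (prepend (h ++ gM) (G.plan αstar v0 ρ (h ++ gM) wM)) := by
      rw [hr]
    rw [← hr0, ← hrM]
    exact hmono (K + 1)
  · -- outcome is ρ
    funext n
    have ht := G.outcome_tail αstar hρ0 (G.theStrat αstar v0 ρ) [] v0 0 (fun n _ => rfl) n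
    rw [Nat.zero_add] at ht
    have h2 : (outcomeAux (G.theStrat αstar v0 ρ) v0 n).2
        = G.plan αstar v0 ρ [] v0 n := by rw [ht]; simp [outcomeAux]
    show (outcomeAux (G.theStrat αstar v0 ρ) v0 n).2 = _
    rw [h2, plan_nil, if_pos rfl]
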